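/- Let X be a CAT(0) space splitting as a metric product X = X₁ × X₂. Then a subset F ⊆ X is a maximal flat if and only if F = F₁ × F₂ where F₁ is a maximal flat in X₁ and F₂ is a maximal flat in X₂. -/

import Mathlib

open Set ENNReal Finset Matrix

set_option linter.unusedSectionVars false
set_option linter.unusedVariables false



def IsUnitSpeedOn {X : Type*} [MetricSpace X] (γ : ℝ → X) (s : Set ℝ) : Prop :=
  ∀ a ∈ s, ∀ b ∈ s, dist (γ a) (γ b) = |a - b|

def GeodesicMetricSpace (X : Type*) [MetricSpace X] : Prop :=
  ∀ x y : X, ∃ γ : ℝ → X, γ 0 = x ∧ γ (dist x y) = y ∧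
    IsUnitSpeedOn γ (Set.Icc 0 (dist x y))

def CAT0Space (X : Type*) [MetricSpace X] : Prop :=
  GeodesicMetricSpace X ∧ ∀ x y m z : X,
    dist x m = dist x y / 2 → dist y m = dist x y / 2 →
    dist z m ^ 2 ≤ dist z x ^ 2 / 2 + dist z y ^ 2 / 2 - dist x y ^ 2 / 4

/-- A flat in a metric space: a subset isometric to a Euclidean space `ℝᵏ`. -/
def IsFlat {X : Type*} [MetricSpace X] (F : Set X) : Prop :=
  ∃ (k : ℕ) (e : EuclideanSpace ℝ (Fin k) → X), Isometry e ∧ Set.range e = F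

/-- A maximal flat: a flat not properly contained in any other flat. -/
def IsMaximalFlat {X : Type*} [MetricSpace X] (F : Set X) : Prop :=
  IsFlat F ∧ ∀ F' : Set X, IsFlat F' → F ⊆ F' → F = F'

/-- In a product `X = X₁ × X₂` of CAT(0) spaces (with the `ℓ²` product
metric), a subset is a maximal flat iff it is a product of maximal flats of the factors. -/


lemma WithLp.equiv_symm_fst {p : ℝ≥0∞} {α β : Type*} (x : α × β) :
    ((WithLp.equiv p (α × β)).symm x).ofLp.1 = x.1 := rfl

lemma WithLp.equiv_symm_snd {p : ℝ≥0∞} {α β : Type*} (x : α × β) :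
    ((WithLp.equiv p (α × β)).symm x).ofLp.2 = x.2 := rfl

lemma prodL2_dist_sq {X₁ X₂ : Type*} [MetricSpace X₁] [MetricSpace X₂]
    (x y : WithLp 2 (X₁ × X₂)) :
    dist x y ^ 2 = dist x.ofLp.1 y.ofLp.1 ^ 2 + dist x.ofLp.2 y.ofLp.2 ^ 2 := by
  have h := WithLp.prod_dist_eq_add (p := 2) (by norm_num) x y
  simp only [← WithLp.ofLp_fst, ← WithLp.ofLp_snd] at h
  rw [h]
  have h2 : (2 : ℝ≥0∞).toReal = 2 := by norm_num
  rw [h2]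
  have hnn : (0:ℝ) ≤ dist x.ofLp.1 y.ofLp.1 ^ (2:ℝ) + dist x.ofLp.2 y.ofLp.2 ^ (2:ℝ) := by positivity
  rw [← Real.rpow_natCast (_ ^ (1/(2:ℝ)) : ℝ) 2, ← Real.rpow_mul hnn]
  rw [show (1/2 * ((2:ℕ):ℝ)) = 1 by norm_num, Real.rpow_one]
  rw [← Real.rpow_natCast (dist x.ofLp.1 y.ofLp.1) 2, ← Real.rpow_natCast (dist x.ofLp.2 y.ofLp.2) 2]
  norm_num

section cat0
variable {X : Type*} [MetricSpace X]

lemma cat0_mid_base (h : CAT0Space X) {z x y m m' : X}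
    (h1 : dist z m = dist z x / 2) (h2 : dist x m = dist z x / 2)
    (h3 : dist z m' = dist z y / 2) (h4 : dist y m' = dist z y / 2) :
    dist m m' ≤ dist x y / 2 := by
  have A := h.2 z x m m' h1 h2
  have B := h.2 z y m' x h3 h4
  rw [dist_comm m' z, h3, dist_comm m' x, dist_comm m' m] at A
  rw [dist_comm x z] at B
  have key : dist m m' ^ 2 ≤ (dist x y / 2) ^ 2 := by nlinarith [A, B]
  have h5 : (0:ℝ) ≤ dist m m' := dist_nonneg
  have h6 : (0:ℝ) ≤ dist x y := dist_nonneg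
  nlinarith [key, h5, h6]

lemma cat0_mid_convex (h : CAT0Space X) {x₁ y₁ x₂ y₂ m₁ m₂ : X}
    (h1 : dist x₁ m₁ = dist x₁ y₁ / 2) (h2 : dist y₁ m₁ = dist x₁ y₁ / 2)
    (h3 : dist x₂ m₂ = dist x₂ y₂ / 2) (h4 : dist y₂ m₂ = dist x₂ y₂ / 2) :
    dist m₁ m₂ ≤ (dist x₁ x₂ + dist y₁ y₂) / 2 := by
  obtain ⟨γ, hγ0, hγd, hγu⟩ := h.1 y₁ x₂
  have hd0 : (0:ℝ) ≤ dist y₁ x₂ := dist_nonneg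
  have hmem0 : (0:ℝ) ∈ Set.Icc 0 (dist y₁ x₂) := by constructor <;> linarith
  have hmemh : dist y₁ x₂ / 2 ∈ Set.Icc 0 (dist y₁ x₂) := by constructor <;> linarith
  have hmemd : dist y₁ x₂ ∈ Set.Icc 0 (dist y₁ x₂) := by constructor <;> linarith
  have e1 : dist y₁ (γ (dist y₁ x₂ / 2)) = dist y₁ x₂ / 2 := by
    have := hγu 0 hmem0 (dist y₁ x₂ / 2) hmemh
    rw [hγ0] at this; rw [this, abs_of_nonpos (by linarith)]; ring
  have e2 : dist x₂ (γ (dist y₁ x₂ / 2)) = dist y₁ x₂ / 2 := by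
    have := hγu (dist y₁ x₂) hmemd (dist y₁ x₂ / 2) hmemh
    rw [hγd] at this; rw [this, abs_of_nonneg (by linarith)]; ring
  have b1 : dist m₁ (γ (dist y₁ x₂ / 2)) ≤ dist x₁ x₂ / 2 := by
    refine cat0_mid_base h (z := y₁) (x := x₁) (y := x₂) ?_ ?_ ?_ ?_
    · rw [dist_comm y₁ x₁]; exact h2
    · rw [dist_comm y₁ x₁]; exact h1
    · exact e1
    · exact e2
  have b2 : dist (γ (dist y₁ x₂ / 2)) m₂ ≤ dist y₁ y₂ / 2 := by
    refine cat0_mid_base h (z := x₂) (x := y₁) (y := y₂) ?_ ?_ ?_ ?_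
    · rw [dist_comm x₂ y₁]; exact e2
    · rw [dist_comm x₂ y₁]; exact e1
    · exact h3
    · exact h4
  calc dist m₁ m₂ ≤ dist m₁ (γ (dist y₁ x₂ / 2)) + dist (γ (dist y₁ x₂ / 2)) m₂ :=
        dist_triangle _ _ _
    _ ≤ dist x₁ x₂ / 2 + dist y₁ y₂ / 2 := by linarith
    _ = (dist x₁ x₂ + dist y₁ y₂) / 2 := by ring

end cat0

lemma mc_bdd_const (φ : ℝ → ℝ) (C : ℝ)
    (mc : ∀ s t : ℝ, φ ((s + t) / 2) ≤ (φ s + φ t) / 2) (bd : ∀ t, φ t ≤ C) :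
    ∀ s t, φ s = φ t := by
  have key : ∀ p q : ℝ, φ q ≤ φ p := by
    intro p q
    by_contra hlt
    push_neg at hlt
    have hδ0 : 0 < φ q - φ p := by linarith
    have grow : ∀ n : ℕ, φ p + 2 ^ n * (φ q - φ p) ≤ φ (p + 2 ^ n * (q - p)) := by
      intro n
      induction n with
      | zero => simp
      | succ n ih =>
        have hm : (p + (p + 2 ^ (n+1) * (q - p))) / 2 = p + 2 ^ n * (q - p) := by ring
        have hmc := mc p (p + 2 ^ (n+1) * (q - p))
        rw [hm] at hmc
        have hpow : (2:ℝ) ^ (n+1) = 2 * 2 ^ n := by ring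
        rw [hpow] at hmc ⊢
        linarith
    obtain ⟨n, hn⟩ := pow_unbounded_of_one_lt ((C - φ p) / (φ q - φ p)) (by norm_num : (1:ℝ) < 2)
    have hg := grow n
    have hb := bd (p + 2 ^ n * (q - p))
    have h1 : 2 ^ n * (φ q - φ p) ≤ C - φ p := by linarith
    have h2 : C - φ p < 2 ^ n * (φ q - φ p) := by
      have := (div_lt_iff₀ hδ0).mp hn
      linarith
    linarith
  intro s t; exact le_antisymm (key t s) (key s t)


/-- Equality case bookkeeping for Minkowski's inequality in the plane. -/
lemma minkowski_eq {a₁ a₂ b₁ b₂ g₁ g₂ A B : ℝ}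
    (ha₁ : 0 ≤ a₁) (ha₂ : 0 ≤ a₂) (hb₁ : 0 ≤ b₁) (hb₂ : 0 ≤ b₂)
    (hg₁ : 0 ≤ g₁) (hg₂ : 0 ≤ g₂) (hA : 0 ≤ A) (hB : 0 ≤ B)
    (hA2 : a₁ ^ 2 + a₂ ^ 2 = A ^ 2) (hB2 : b₁ ^ 2 + b₂ ^ 2 = B ^ 2)
    (hG2 : g₁ ^ 2 + g₂ ^ 2 = (A + B) ^ 2)
    (ht₁ : g₁ ≤ a₁ + b₁) (ht₂ : g₂ ≤ a₂ + b₂) :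
    g₁ = a₁ + b₁ ∧ (A + B) * a₁ = A * g₁ := by
  -- Cauchy-Schwarz: a·b ≤ AB
  have cs : a₁ * b₁ + a₂ * b₂ ≤ A * B := by
    nlinarith [sq_nonneg (a₁ * b₂ - a₂ * b₁), sq_nonneg (a₁ * b₁ + a₂ * b₂ - A * B),
      sq_nonneg (a₁ * b₁ + a₂ * b₂ + A * B), mul_nonneg hA hB,
      mul_nonneg (mul_nonneg ha₁ hb₁) (mul_nonneg ha₂ hb₂)]
  -- reverse inequality from triangle inequalities
  have rev : A * B ≤ a₁ * b₁ + a₂ * b₂ := by nlinarith [ht₁, ht₂, hg₁, hg₂]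
  have heq : a₁ * b₁ + a₂ * b₂ = A * B := le_antisymm cs rev
  have hsum : (a₁ + b₁) ^ 2 + (a₂ + b₂) ^ 2 = (A + B) ^ 2 := by nlinarith
  have he₁ : g₁ = a₁ + b₁ := by
    have t1 : 0 ≤ a₁ + b₁ - g₁ := by linarith
    have t2 : 0 ≤ a₁ + b₁ + g₁ := by linarith
    have t3 : 0 ≤ a₂ + b₂ - g₂ := by linarith
    have t4 : 0 ≤ a₂ + b₂ + g₂ := by linarith
    have hprod : (a₁ + b₁ - g₁) * (a₁ + b₁ + g₁) + (a₂ + b₂ - g₂) * (a₂ + b₂ + g₂) = 0 := by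
      linear_combination hsum - hG2
    have e : (a₁ + b₁ - g₁) * (a₁ + b₁ + g₁) = 0 := by
      linarith [hprod, mul_nonneg t1 t2, mul_nonneg t3 t4]
    rcases mul_eq_zero.mp e with h | h
    · linarith
    · linarith
  refine ⟨he₁, ?_⟩
  have hz : (a₁ * B - b₁ * A) ^ 2 + (a₂ * B - b₂ * A) ^ 2 = 0 := by
    linear_combination B ^ 2 * hA2 + A ^ 2 * hB2 - 2 * A * B * heq
  have hz₁ : a₁ * B = b₁ * A := by
    have s1 : (a₁ * B - b₁ * A) ^ 2 = 0 := by
      linarith [hz, sq_nonneg (a₂ * B - b₂ * A), sq_nonneg (a₁ * B - b₁ * A)]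
    have := sq_eq_zero_iff.mp s1
    linarith
  rw [he₁]; linear_combination hz₁

lemma linearize (f : ℝ → ℝ → ℝ) (hsymm : ∀ s t, f s t = f t s) (hdiag : ∀ s, f s s = 0)
    (hadd : ∀ {s t u : ℝ}, s < t → t < u → f s u = f s t + f t u)
    (hprop : ∀ {s t u : ℝ}, s < t → t < u → (u - s) * f s t = (t - s) * f s u) :
    ∀ s t, f s t = f 0 1 * |s - t| := by
  have key : ∀ s t : ℝ, s < t → f s t = f 0 1 * (t - s) := by
    intro s t hst
    set a : ℝ := min s 0 - 1 with ha
    set b : ℝ := max t 1 + 1 with hb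
    have has : a < s := by have := min_le_left s 0; simp only [ha]; linarith
    have ha0 : a < 0 := by have := min_le_right s 0; simp only [ha]; linarith
    have htb : t < b := by have := le_max_left t 1; simp only [hb]; linarith
    have h1b : (1:ℝ) < b := by have := le_max_right t 1; simp only [hb]; linarith
    have hab : a < b := by linarith
    have inner : ∀ p q : ℝ, a < p → p < q → q < b → (b - a) * f p q = (q - p) * f a b := by
      intro p q hap hpq hqb
      have e1 : f a q = f a p + f p q := hadd hap hpq
      have e2 : (b - a) * f a p = (p - a) * f a b := hprop hap (by linarith)
      have e3 : (b - a) * f a q = (q - a) * f a b := hprop (by linarith) hqb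
      nlinarith [e1, e2, e3]
    have i1 := inner s t has hst htb
    have i2 := inner 0 1 ha0 (by norm_num) h1b
    have hba : (0:ℝ) < b - a := by linarith
    have hf : f s t = (t - s) * f a b / (b - a) := by
      field_simp at i1 ⊢
      linarith
    rw [hf]
    have hf2 : f 0 1 = f a b / (b - a) := by
      field_simp at i2 ⊢
      linarith
    rw [hf2]; ring
  intro s t
  rcases lt_trichotomy s t with h | h | h
  · rw [key s t h, abs_of_neg (by linarith : s - t < 0)]; ring
  · rw [h, hdiag t, sub_self, abs_zero, mul_zero]
  · rw [hsymm, key t s h, abs_of_pos (by linarith : 0 < s - t)]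

section core
variable {Y Z : Type*} [MetricSpace Y] [MetricSpace Z] {k : ℕ}

variable {e : EuclideanSpace ℝ (Fin k) → WithLp 2 (Y × Z)}

lemma dist_sq_split (he : Isometry e) (x y : EuclideanSpace ℝ (Fin k)) :
    dist (e x).ofLp.1 (e y).ofLp.1 ^ 2 + dist (e x).ofLp.2 (e y).ofLp.2 ^ 2 = dist x y ^ 2 := by
  have h := prodL2_dist_sq (e x) (e y)
  rw [he.dist_eq] at h
  linarith

lemma coord_le (he : Isometry e) (x y : EuclideanSpace ℝ (Fin k)) :
    dist (e x).ofLp.1 (e y).ofLp.1 ≤ dist x y := by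
  have h := dist_sq_split he x y
  nlinarith [dist_nonneg (x := (e x).ofLp.1) (y := (e y).ofLp.1), dist_nonneg (x := x) (y := y),
    sq_nonneg (dist (e x).ofLp.2 (e y).ofLp.2)]

lemma line_dist (x v : EuclideanSpace ℝ (Fin k)) (s t : ℝ) :
    dist (x + s • v) (x + t • v) = |s - t| * ‖v‖ := by
  rw [dist_eq_norm]
  have hveq : (x + s • v) - (x + t • v) = (s - t) • v := by module
  rw [hveq, norm_smul, Real.norm_eq_abs]

/-- on every line, the first-coordinate distance is linear in the parameter -/
lemma speed1 (he : Isometry e) (x v : EuclideanSpace ℝ (Fin k)) (s t : ℝ) :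
    dist (e (x + s • v)).ofLp.1 (e (x + t • v)).ofLp.1
      = dist (e (x + (0:ℝ) • v)).ofLp.1 (e (x + (1:ℝ) • v)).ofLp.1 * |s - t| := by
  rcases eq_or_ne v 0 with rfl | hv
  · simp
  have hvn : 0 < ‖v‖ := norm_pos_iff.mpr hv
  set f : ℝ → ℝ → ℝ := fun s t => dist (e (x + s • v)).ofLp.1 (e (x + t • v)).ofLp.1 with hf
  set g : ℝ → ℝ → ℝ := fun s t => dist (e (x + s • v)).ofLp.2 (e (x + t • v)).ofLp.2 with hg
  have hsq : ∀ s t : ℝ, f s t ^ 2 + g s t ^ 2 = (|s - t| * ‖v‖) ^ 2 := by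
    intro s t
    have := dist_sq_split he (x + s • v) (x + t • v)
    rw [line_dist] at this
    exact this
  have key : ∀ {s t u : ℝ}, s < t → t < u →
      (f s u = f s t + f t u ∧ (u - s) * ‖v‖ * f s t = (t - s) * ‖v‖ * f s u) := by
    intro s t u hst htu
    have hA2 : f s t ^ 2 + g s t ^ 2 = ((t - s) * ‖v‖) ^ 2 := by
      rw [hsq s t, abs_sub_comm, abs_of_pos (by linarith : (0:ℝ) < t - s)]
    have hB2 : f t u ^ 2 + g t u ^ 2 = ((u - t) * ‖v‖) ^ 2 := by
      rw [hsq t u, abs_sub_comm, abs_of_pos (by linarith : (0:ℝ) < u - t)]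
    have hG2 : f s u ^ 2 + g s u ^ 2 = ((t - s) * ‖v‖ + (u - t) * ‖v‖) ^ 2 := by
      rw [hsq s u, abs_sub_comm, abs_of_pos (by linarith : (0:ℝ) < u - s)]; ring
    have ht₁ : f s u ≤ f s t + f t u := dist_triangle _ _ _
    have ht₂ : g s u ≤ g s t + g t u := dist_triangle _ _ _
    have := minkowski_eq dist_nonneg dist_nonneg dist_nonneg dist_nonneg dist_nonneg
      dist_nonneg (mul_nonneg (by linarith) (norm_nonneg v)) (mul_nonneg (by linarith) (norm_nonneg v)) hA2 hB2 hG2 ht₁ ht₂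
    constructor
    · exact this.1
    · have h2 := this.2
      calc (u - s) * ‖v‖ * f s t = ((t - s) * ‖v‖ + (u - t) * ‖v‖) * f s t := by ring
        _ = (t - s) * ‖v‖ * f s u := by rw [h2]
  have hlin := linearize f (fun s t => dist_comm _ _) (fun s => dist_self _)
    (fun hst htu => (key hst htu).1)
    (fun {s t u} hst htu => by
      have := (key hst htu).2
      have hne : ‖v‖ ≠ 0 := ne_of_gt hvn
      field_simp at this ⊢
      nlinarith [this])
  exact hlin s t

lemma swap_isometry (e : EuclideanSpace ℝ (Fin k) → WithLp 2 (Y × Z)) (he : Isometry e) :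
    Isometry (fun x => ((WithLp.equiv 2 (Z × Y)).symm ((e x).ofLp.2, (e x).ofLp.1))) := by
  apply Isometry.of_dist_eq
  intro x y
  rw [← he.dist_eq x y]
  have h1 := prodL2_dist_sq (e x) (e y)
  have h2 := prodL2_dist_sq ((WithLp.equiv 2 (Z × Y)).symm ((e x).ofLp.2, (e x).ofLp.1))
      ((WithLp.equiv 2 (Z × Y)).symm ((e y).ofLp.2, (e y).ofLp.1))
  simp only [WithLp.equiv_symm_fst, WithLp.equiv_symm_snd] at h2
  have nn1 : 0 ≤ dist ((WithLp.equiv 2 (Z × Y)).symm ((e x).ofLp.2, (e x).ofLp.1))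
      ((WithLp.equiv 2 (Z × Y)).symm ((e y).ofLp.2, (e y).ofLp.1)) := dist_nonneg
  have nn2 : 0 ≤ dist (e x) (e y) := dist_nonneg
  nlinarith [h1, h2]


lemma abs_half (s t : ℝ) : |s - (s + t)/2| = |s - t| / 2 := by
  rw [show s - (s + t)/2 = (s - t)/2 by ring, abs_div]; norm_num

lemma abs_half' (s t : ℝ) : |t - (s + t)/2| = |s - t| / 2 := by
  rw [show t - (s + t)/2 = -((s - t)/2) by ring, abs_neg, abs_div]; norm_num

/-- translation invariance of the first-coordinate pseudometric -/
lemma trans1 (hY : CAT0Space Y) (he : Isometry e) (x y v : EuclideanSpace ℝ (Fin k)) :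
    dist (e (x + v)).ofLp.1 (e (y + v)).ofLp.1 = dist (e x).ofLp.1 (e y).ofLp.1 := by
  set φ : ℝ → ℝ := fun t => dist (e (x + t • v)).ofLp.1 (e (y + t • v)).ofLp.1 with hφ
  have mc : ∀ s t : ℝ, φ ((s + t) / 2) ≤ (φ s + φ t) / 2 := by
    intro s t
    refine cat0_mid_convex hY
      (x₁ := (e (x + s • v)).ofLp.1) (y₁ := (e (x + t • v)).ofLp.1) (m₁ := (e (x + ((s + t)/2) • v)).ofLp.1)
      (x₂ := (e (y + s • v)).ofLp.1) (y₂ := (e (y + t • v)).ofLp.1) (m₂ := (e (y + ((s + t)/2) • v)).ofLp.1)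
      ?_ ?_ ?_ ?_
    · rw [speed1 he x v s ((s+t)/2), speed1 he x v s t, abs_half]; ring
    · rw [speed1 he x v t ((s+t)/2), speed1 he x v s t, abs_half']; ring
    · rw [speed1 he y v s ((s+t)/2), speed1 he y v s t, abs_half]; ring
    · rw [speed1 he y v t ((s+t)/2), speed1 he y v s t, abs_half']; ring
  have bd : ∀ t : ℝ, φ t ≤ dist x y := by
    intro t
    have h := coord_le he (x + t • v) (y + t • v)
    rwa [dist_add_right] at h
  have := mc_bdd_const φ (dist x y) mc bd 1 0
  simpa [hφ] using this

/-- the first-coordinate distance as a function of the difference vector -/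
noncomputable def Df (e : EuclideanSpace ℝ (Fin k) → WithLp 2 (Y × Z))
    (v : EuclideanSpace ℝ (Fin k)) : ℝ := dist (e 0).ofLp.1 (e v).ofLp.1

lemma d1_eq_Df (hY : CAT0Space Y) (he : Isometry e) (x y : EuclideanSpace ℝ (Fin k)) :
    dist (e x).ofLp.1 (e y).ofLp.1 = Df e (y - x) := by
  have := trans1 hY he x y (-x)
  rw [add_neg_cancel] at this
  rw [← this, Df, sub_eq_add_neg]

lemma Df_nonneg (v : EuclideanSpace ℝ (Fin k)) : 0 ≤ Df e v := dist_nonneg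

lemma Df_homog (he : Isometry e) (t : ℝ) (v : EuclideanSpace ℝ (Fin k)) :
    Df e (t • v) = |t| * Df e v := by
  have h := speed1 he 0 v 0 t
  simp only [zero_smul, add_zero, one_smul, zero_add] at h
  show dist (e 0).ofLp.1 (e (t • v)).ofLp.1 = |t| * dist (e 0).ofLp.1 (e v).ofLp.1
  rw [h, zero_sub, abs_neg]; ring

lemma Df_even (he : Isometry e) (v : EuclideanSpace ℝ (Fin k)) : Df e (-v) = Df e v := by
  have := Df_homog he (-1) v
  simpa using this

lemma Df_le (he : Isometry e) (v : EuclideanSpace ℝ (Fin k)) : Df e v ≤ ‖v‖ := by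
  have h := dist_sq_split he 0 v
  have : dist (0 : EuclideanSpace ℝ (Fin k)) v = ‖v‖ := by
    rw [dist_eq_norm, zero_sub, norm_neg]
  rw [this] at h
  have hd : Df e v = dist (e 0).ofLp.1 (e v).ofLp.1 := rfl
  nlinarith [hd, h, norm_nonneg v, sq_nonneg (dist (e 0).ofLp.2 (e v).ofLp.2),
    dist_nonneg (x := (e 0).ofLp.1) (y := (e v).ofLp.1)]

lemma Df_triangle (hY : CAT0Space Y) (he : Isometry e) (u v : EuclideanSpace ℝ (Fin k)) :
    Df e (u + v) ≤ Df e u + Df e v := by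
  have h := dist_triangle (e 0).ofLp.1 (e u).ofLp.1 (e (u + v)).ofLp.1
  rw [d1_eq_Df hY he u (u + v), add_sub_cancel_left] at h
  exact h

lemma Df_lip (hY : CAT0Space Y) (he : Isometry e) (u v : EuclideanSpace ℝ (Fin k)) :
    |Df e u - Df e v| ≤ ‖u - v‖ := by
  have h1 : Df e u ≤ Df e v + Df e (u - v) := by
    have := Df_triangle hY he v (u - v)
    rwa [add_sub_cancel] at this
  have h2 : Df e v ≤ Df e u + Df e (v - u) := by
    have := Df_triangle hY he u (v - u)
    rwa [add_sub_cancel] at this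
  have h3 : Df e (u - v) ≤ ‖u - v‖ := Df_le he _
  have h4 : Df e (v - u) ≤ ‖v - u‖ := Df_le he _
  rw [norm_sub_rev] at h4
  rw [abs_le]; constructor <;> linarith

/-- parallelogram inequality (one direction) from the CAT(0) condition -/
lemma Df_par_ge (hY : CAT0Space Y) (he : Isometry e) (u v : EuclideanSpace ℝ (Fin k)) :
    2 * Df e u ^ 2 + 2 * Df e v ^ 2 ≤ Df e (u + v) ^ 2 + Df e (u - v) ^ 2 := by
  have hxm : dist (e u).ofLp.1 (e 0).ofLp.1 = dist (e u).ofLp.1 (e (-u)).ofLp.1 / 2 := by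
    rw [d1_eq_Df hY he u 0, d1_eq_Df hY he u (-u)]
    rw [zero_sub, Df_even he u, show -u - u = (-2 : ℝ) • u by module, Df_homog he (-2) u]
    rw [show |(-2 : ℝ)| = 2 by norm_num]
    ring
  have hym : dist (e (-u)).ofLp.1 (e 0).ofLp.1 = dist (e u).ofLp.1 (e (-u)).ofLp.1 / 2 := by
    rw [d1_eq_Df hY he (-u) 0, d1_eq_Df hY he u (-u)]
    rw [zero_sub, neg_neg, show -u - u = (-2 : ℝ) • u by module, Df_homog he (-2) u]
    rw [show |(-2 : ℝ)| = 2 by norm_num]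
    ring
  have key := hY.2 (e u).ofLp.1 (e (-u)).ofLp.1 (e 0).ofLp.1 (e v).ofLp.1 hxm hym
  rw [d1_eq_Df hY he v 0, d1_eq_Df hY he v u, d1_eq_Df hY he v (-u), d1_eq_Df hY he u (-u)] at key
  rw [zero_sub, Df_even he v, show -u - v = -(u + v) by module, Df_even he (u + v),
    show -u - u = (-2 : ℝ) • u by module, Df_homog he (-2) u,
    show |(-2 : ℝ)| = 2 by norm_num] at key
  nlinarith [key]

end core

section main
variable {X₁ X₂ : Type*} [MetricSpace X₁] [MetricSpace X₂] {k : ℕ}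
variable {e : EuclideanSpace ℝ (Fin k) → WithLp 2 (X₁ × X₂)}

/-- the swapped map -/
noncomputable def eswap (e : EuclideanSpace ℝ (Fin k) → WithLp 2 (X₁ × X₂)) :
    EuclideanSpace ℝ (Fin k) → WithLp 2 (X₂ × X₁) :=
  fun x => (WithLp.equiv 2 (X₂ × X₁)).symm ((e x).ofLp.2, (e x).ofLp.1)

lemma Df_eswap (v : EuclideanSpace ℝ (Fin k)) : Df (eswap e) v = dist (e 0).ofLp.2 (e v).ofLp.2 := rfl

lemma Df_sq_sum (he : Isometry e) (v : EuclideanSpace ℝ (Fin k)) :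
    Df e v ^ 2 + Df (eswap e) v ^ 2 = ‖v‖ ^ 2 := by
  have h := dist_sq_split he 0 v
  have h0 : dist (0 : EuclideanSpace ℝ (Fin k)) v = ‖v‖ := by
    rw [dist_eq_norm, zero_sub, norm_neg]
  rw [h0] at h
  exact h

lemma Df_par_eq (h₁ : CAT0Space X₁) (h₂ : CAT0Space X₂) (he : Isometry e)
    (u v : EuclideanSpace ℝ (Fin k)) :
    Df e (u + v) ^ 2 + Df e (u - v) ^ 2 = 2 * Df e u ^ 2 + 2 * Df e v ^ 2 := by
  have g1 := Df_par_ge h₁ he u v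
  have g2 := Df_par_ge h₂ (swap_isometry e he) u v
  have s1 := Df_sq_sum he (u + v)
  have s2 := Df_sq_sum he (u - v)
  have s3 := Df_sq_sum he u
  have s4 := Df_sq_sum he v
  have hpar : ‖u + v‖ ^ 2 + ‖u - v‖ ^ 2 = 2 * ‖u‖ ^ 2 + 2 * ‖v‖ ^ 2 := by
    have := norm_add_sq_real u v
    have := norm_sub_sq_real u v
    linarith
  have hsw : ∀ w, Df (eswap e) w = Df (fun x => ((WithLp.equiv 2 (X₂ × X₁)).symm ((e x).ofLp.2, (e x).ofLp.1))) w := fun _ => rfl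
  rw [hsw] at s1 s2 s3 s4
  linarith

end main

section bform
variable {X₁ X₂ : Type*} [MetricSpace X₁] [MetricSpace X₂] {k : ℕ}
variable {e : EuclideanSpace ℝ (Fin k) → WithLp 2 (X₁ × X₂)}

/-- candidate inner product from `Df` -/
noncomputable def Bf (e : EuclideanSpace ℝ (Fin k) → WithLp 2 (X₁ × X₂))
    (u v : EuclideanSpace ℝ (Fin k)) : ℝ :=
  (Df e (u + v) ^ 2 - Df e (u - v) ^ 2) / 4

lemma Bf_symm (he : Isometry e) (u v : EuclideanSpace ℝ (Fin k)) : Bf e u v = Bf e v u := by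
  rw [Bf, Bf, add_comm, show u - v = -(v - u) by module, Df_even he]

lemma Bf_diag (he : Isometry e) (v : EuclideanSpace ℝ (Fin k)) : Bf e v v = Df e v ^ 2 := by
  rw [Bf, show v + v = (2:ℝ) • v by module, sub_self, Df_homog he 2 v]
  have h0 : Df e 0 = 0 := dist_self _
  rw [h0, show |(2:ℝ)| = 2 by norm_num]
  ring

lemma Bf_dbl (h₁ : CAT0Space X₁) (h₂ : CAT0Space X₂) (he : Isometry e)
    (w z : EuclideanSpace ℝ (Fin k)) :
    Df e (w + (z + z)) ^ 2 - Df e (w - (z + z)) ^ 2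
      = 2 * Df e (w + z) ^ 2 - 2 * Df e (w - z) ^ 2 := by
  have p1 := Df_par_eq h₁ h₂ he (w + z) z
  rw [show w + z + z = w + (z + z) by module, show w + z - z = w by module] at p1
  have p2 := Df_par_eq h₁ h₂ he (w - z) z
  rw [show w - z + z = w by module, show w - z - z = w - (z + z) by module] at p2
  linarith

lemma Bf_add_left (h₁ : CAT0Space X₁) (h₂ : CAT0Space X₂) (he : Isometry e)
    (x y z : EuclideanSpace ℝ (Fin k)) :
    Bf e (x + y) z = Bf e x z + Bf e y z := by
  have p1 := Df_par_eq h₁ h₂ he (x + z) (y + z)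
  rw [show x + z + (y + z) = x + y + (z + z) by module,
    show x + z - (y + z) = x - y by module] at p1
  have p2 := Df_par_eq h₁ h₂ he (x - z) (y - z)
  rw [show x - z + (y - z) = x + y - (z + z) by module,
    show x - z - (y - z) = x - y by module] at p2
  have d := Bf_dbl h₁ h₂ he (x + y) z
  rw [Bf, Bf, Bf]
  linarith

lemma Df_cont (h₁ : CAT0Space X₁) (h₂ : CAT0Space X₂) (he : Isometry e) :
    Continuous (Df e) := by
  have : LipschitzWith 1 (Df e) := by
    apply LipschitzWith.of_dist_le_mul
    intro u v
    rw [Real.dist_eq, dist_eq_norm, NNReal.coe_one, one_mul]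
    exact Df_lip h₁ he u v
  exact this.continuous

lemma Bf_smul_left (h₁ : CAT0Space X₁) (h₂ : CAT0Space X₂) (he : Isometry e)
    (c : ℝ) (x z : EuclideanSpace ℝ (Fin k)) :
    Bf e (c • x) z = c * Bf e x z := by
  have hcont : Continuous (fun x => Bf e x z) := by
    have hD := Df_cont h₁ h₂ he
    have c1 : Continuous fun x : EuclideanSpace ℝ (Fin k) => Df e (x + z) :=
      hD.comp (continuous_id.add continuous_const)
    have c2 : Continuous fun x : EuclideanSpace ℝ (Fin k) => Df e (x - z) :=
      hD.comp (continuous_id.sub continuous_const)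
    exact ((c1.pow 2).sub (c2.pow 2)).div_const 4
  let F : EuclideanSpace ℝ (Fin k) →+ ℝ :=
    AddMonoidHom.mk' (fun x => Bf e x z) (fun a b => Bf_add_left h₁ h₂ he a b z)
  have := (F.toRealLinearMap hcont).map_smul c x
  exact this

lemma Bf_sum_left (h₁ : CAT0Space X₁) (h₂ : CAT0Space X₂) (he : Isometry e)
    {ι : Type*} (s : Finset ι) (w : ι → EuclideanSpace ℝ (Fin k))
    (z : EuclideanSpace ℝ (Fin k)) :
    Bf e (∑ i ∈ s, w i) z = ∑ i ∈ s, Bf e (w i) z := by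
  let F : EuclideanSpace ℝ (Fin k) →+ ℝ :=
    AddMonoidHom.mk' (fun x => Bf e x z) (fun a b => Bf_add_left h₁ h₂ he a b z)
  exact map_sum F w s

end bform

section matrixpart
variable {X₁ X₂ : Type*} [MetricSpace X₁] [MetricSpace X₂] {k : ℕ}
variable {e : EuclideanSpace ℝ (Fin k) → WithLp 2 (X₁ × X₂)}

/-- the Gram matrix of `Bf` in the standard basis -/
noncomputable def Mmat (e : EuclideanSpace ℝ (Fin k) → WithLp 2 (X₁ × X₂)) :
    Matrix (Fin k) (Fin k) ℝ :=
  Matrix.of fun i j => Bf e (EuclideanSpace.single i 1) (EuclideanSpace.single j 1)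

lemma sum_single (v : EuclideanSpace ℝ (Fin k)) :
    ∑ i, v i • EuclideanSpace.single i (1:ℝ) = v := by
  have := (EuclideanSpace.basisFun (Fin k) ℝ).sum_repr v
  simpa [EuclideanSpace.basisFun_apply, EuclideanSpace.basisFun_repr] using this

lemma Bf_expand (h₁ : CAT0Space X₁) (h₂ : CAT0Space X₂) (he : Isometry e)
    (u v : EuclideanSpace ℝ (Fin k)) :
    Bf e u v = ∑ i, ∑ j, u i * v j * Mmat e i j := by
  conv_lhs => rw [← sum_single u]
  rw [Bf_sum_left h₁ h₂ he]
  refine Finset.sum_congr rfl fun i _ => ?_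
  rw [Bf_smul_left h₁ h₂ he]
  rw [Bf_symm he]
  conv_lhs => rw [← sum_single v, Bf_sum_left h₁ h₂ he]
  rw [Finset.mul_sum]
  refine Finset.sum_congr rfl fun j _ => ?_
  rw [Bf_smul_left h₁ h₂ he, Bf_symm he]
  show u i * (v j * Bf e (EuclideanSpace.single i 1) (EuclideanSpace.single j 1)) = _
  rw [show Mmat e i j = Bf e (EuclideanSpace.single i 1) (EuclideanSpace.single j 1) from rfl]
  ring

lemma dot_eq_Bf (h₁ : CAT0Space X₁) (h₂ : CAT0Space X₂) (he : Isometry e)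
    (v : EuclideanSpace ℝ (Fin k)) :
    dotProduct (WithLp.equiv 2 _ v) (Mmat e *ᵥ (WithLp.equiv 2 _ v)) = Bf e v v := by
  rw [Bf_expand h₁ h₂ he v v]
  simp only [dotProduct, Matrix.mulVec, Finset.mul_sum]
  refine Finset.sum_congr rfl fun i _ => Finset.sum_congr rfl fun j _ => ?_
  show v i * (Mmat e i j * v j) = v i * v j * Mmat e i j
  ring

lemma Mmat_posSemidef (h₁ : CAT0Space X₁) (h₂ : CAT0Space X₂) (he : Isometry e) :
    (Mmat e).PosSemidef := by
  rw [Matrix.posSemidef_iff_dotProduct_mulVec]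
  constructor
  · show (Mmat e).conjTranspose = Mmat e
    rw [Matrix.conjTranspose_eq_transpose_of_trivial]
    ext i j
    show Mmat e j i = Mmat e i j
    rw [Mmat]
    exact Bf_symm he _ _
  · intro x
    have hx := dot_eq_Bf h₁ h₂ he ((WithLp.equiv 2 (Fin k → ℝ)).symm x)
    have hxx : (WithLp.equiv 2 (Fin k → ℝ)) ((WithLp.equiv 2 (Fin k → ℝ)).symm x) = x :=
      (WithLp.equiv 2 _).apply_symm_apply x
    rw [hxx] at hx
    have hb := Bf_diag he ((WithLp.equiv 2 (Fin k → ℝ)).symm x)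
    rw [hb] at hx
    show (0:ℝ) ≤ dotProduct (star x) (Mmat e *ᵥ x)
    rw [star_trivial]
    rw [hx]
    positivity

end matrixpart

section flatpart
variable {X₁ X₂ : Type*} [MetricSpace X₁] [MetricSpace X₂] {k : ℕ}
variable {e : EuclideanSpace ℝ (Fin k) → WithLp 2 (X₁ × X₂)}

lemma proj_flat_fst (h₁ : CAT0Space X₁) (h₂ : CAT0Space X₂) (he : Isometry e) :
    ∃ (r : ℕ) (g : EuclideanSpace ℝ (Fin r) → X₁), Isometry g ∧
      Set.range g = Set.range (fun x => (e x).ofLp.1) := by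
  classical
  have hM := Mmat_posSemidef h₁ h₂ he
  open MatrixOrder in
  obtain ⟨R, hRh, -, hRR⟩ := CFC.exists_sqrt_of_isSelfAdjoint_of_quasispectrumRestricts
    hM.isHermitian (QuasispectrumRestricts.nnreal_of_nonneg hM.nonneg)
  have hMR : Mmat e = R * R := hRR.symm
  set L : EuclideanSpace ℝ (Fin k) →ₗ[ℝ] EuclideanSpace ℝ (Fin k) :=
    Matrix.toEuclideanLin R with hLdef
  have normL : ∀ v : EuclideanSpace ℝ (Fin k), ‖L v‖ ^ 2 = Bf e v v := by
    intro v
    set x : Fin k → ℝ := WithLp.equiv 2 _ v with hx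
    have h1 : ‖L v‖ ^ 2 = ∑ i, (L v i) ^ 2 := by
      rw [EuclideanSpace.norm_eq, Real.sq_sqrt (by positivity)]
      refine Finset.sum_congr rfl fun i _ => ?_
      rw [Real.norm_eq_abs, sq_abs]
    have h2 : ∀ i, L v i = (R *ᵥ x) i := fun i => rfl
    have h3 : ∑ i, (L v i) ^ 2 = (R *ᵥ x) ⬝ᵥ (R *ᵥ x) := by
      simp only [dotProduct, h2, sq]
    have hRT : Rᵀ = R := by
      rw [← Matrix.conjTranspose_eq_transpose_of_trivial]
      exact hRh
    have key : (R *ᵥ x) ⬝ᵥ (R *ᵥ x) = x ⬝ᵥ (Mmat e *ᵥ x) := by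
      rw [hMR, ← Matrix.mulVec_mulVec, Matrix.dotProduct_mulVec x R (R *ᵥ x),
        ← Matrix.mulVec_transpose, hRT]
    rw [h1, h3, key, hx]
    exact dot_eq_Bf h₁ h₂ he v
  have hDfL : ∀ w, Df e w = ‖L w‖ := by
    intro w
    have hsq : Df e w ^ 2 = ‖L w‖ ^ 2 := by rw [normL w, Bf_diag he w]
    calc Df e w = √(Df e w ^ 2) := (Real.sqrt_sq (Df_nonneg _)).symm
      _ = √(‖L w‖ ^ 2) := by rw [hsq]
      _ = ‖L w‖ := Real.sqrt_sq (norm_nonneg _)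
  have dist_L : ∀ x y, dist (e x).ofLp.1 (e y).ofLp.1 = dist (L x) (L y) := by
    intro x y
    rw [d1_eq_Df h₁ he x y, dist_eq_norm, ← map_sub,
      show x - y = -(y - x) by module, map_neg, norm_neg]
    exact hDfL (y - x)
  set S := LinearMap.range L with hS
  set r := Module.finrank ℝ S with hr
  set ψ := (stdOrthonormalBasis ℝ S).repr with hψ
  have hsurj : Function.Surjective (fun v => (⟨L v, LinearMap.mem_range_self L v⟩ : S)) := by
    rintro ⟨w, hw⟩
    obtain ⟨v, hv⟩ := hw
    exact ⟨v, Subtype.ext hv⟩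
  set pre := Function.surjInv hsurj with hpredef
  have hpre : ∀ s : S, L (pre s) = (s : EuclideanSpace ℝ (Fin k)) := by
    intro s
    exact congrArg Subtype.val (Function.surjInv_eq hsurj s)
  refine ⟨r, fun w => (e (pre (ψ.symm w))).ofLp.1, ?_, ?_⟩
  · apply Isometry.of_dist_eq
    intro w w'
    rw [dist_L (pre (ψ.symm w)) (pre (ψ.symm w'))]
    rw [show dist (L (pre (ψ.symm w))) (L (pre (ψ.symm w')))
        = dist ((ψ.symm w : S) : EuclideanSpace ℝ (Fin k)) ((ψ.symm w' : S) : EuclideanSpace ℝ (Fin k)) by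
      rw [hpre, hpre]]
    rw [show dist ((ψ.symm w : S) : EuclideanSpace ℝ (Fin k)) ((ψ.symm w' : S) : EuclideanSpace ℝ (Fin k))
        = dist (ψ.symm w) (ψ.symm w') from rfl]
    exact ψ.symm.dist_map w w'
  · ext z
    constructor
    · rintro ⟨w, rfl⟩
      exact ⟨pre (ψ.symm w), rfl⟩
    · rintro ⟨x, rfl⟩
      refine ⟨ψ ⟨L x, LinearMap.mem_range_self L x⟩, ?_⟩
      show (e (pre (ψ.symm (ψ ⟨L x, _⟩)))).ofLp.1 = (e x).ofLp.1
      rw [ψ.symm_apply_apply]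
      have hd : dist (e (pre ⟨L x, LinearMap.mem_range_self L x⟩)).ofLp.1 (e x).ofLp.1
          = dist (L (pre ⟨L x, LinearMap.mem_range_self L x⟩)) (L x) := dist_L _ _
      rw [hpre ⟨L x, LinearMap.mem_range_self L x⟩] at hd
      simpa [dist_eq_zero] using hd

end flatpart

section prodflat
variable {X₁ X₂ : Type*} [MetricSpace X₁] [MetricSpace X₂]

lemma eucl_dist_sq {n : ℕ} (x y : EuclideanSpace ℝ (Fin n)) :
    dist x y ^ 2 = ∑ i, dist (x i) (y i) ^ 2 := by
  rw [EuclideanSpace.dist_eq, Real.sq_sqrt (by positivity)]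

lemma isFlat_prod {F₁ : Set X₁} {F₂ : Set X₂} (hf1 : IsFlat F₁) (hf2 : IsFlat F₂) :
    IsFlat {p : WithLp 2 (X₁ × X₂) | p.ofLp.1 ∈ F₁ ∧ p.ofLp.2 ∈ F₂} := by
  obtain ⟨k₁, e₁, he₁, hr₁⟩ := hf1
  obtain ⟨k₂, e₂, he₂, hr₂⟩ := hf2
  refine ⟨k₁ + k₂, fun x => (WithLp.equiv 2 (X₁ × X₂)).symm
    (e₁ (WithLp.toLp 2 fun i => x (Fin.castAdd k₂ i)), e₂ (WithLp.toLp 2 fun i => x (Fin.natAdd k₁ i))), ?_, ?_⟩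
  · apply Isometry.of_dist_eq
    intro x y
    have key : dist ((WithLp.equiv 2 (X₁ × X₂)).symm
          (e₁ (WithLp.toLp 2 fun i => x (Fin.castAdd k₂ i)), e₂ (WithLp.toLp 2 fun i => x (Fin.natAdd k₁ i))))
        ((WithLp.equiv 2 (X₁ × X₂)).symm
          (e₁ (WithLp.toLp 2 fun i => y (Fin.castAdd k₂ i)), e₂ (WithLp.toLp 2 fun i => y (Fin.natAdd k₁ i)))) ^ 2
        = dist x y ^ 2 := by
      rw [prodL2_dist_sq]
      rw [WithLp.equiv_symm_fst, WithLp.equiv_symm_fst, WithLp.equiv_symm_snd,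
        WithLp.equiv_symm_snd]
      rw [he₁.dist_eq, he₂.dist_eq, eucl_dist_sq, eucl_dist_sq, eucl_dist_sq]
      rw [Fin.sum_univ_add]
    have h1 : (0:ℝ) ≤ dist ((WithLp.equiv 2 (X₁ × X₂)).symm
          (e₁ (WithLp.toLp 2 fun i => x (Fin.castAdd k₂ i)), e₂ (WithLp.toLp 2 fun i => x (Fin.natAdd k₁ i))))
        ((WithLp.equiv 2 (X₁ × X₂)).symm
          (e₁ (WithLp.toLp 2 fun i => y (Fin.castAdd k₂ i)), e₂ (WithLp.toLp 2 fun i => y (Fin.natAdd k₁ i)))) := dist_nonneg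
    nlinarith [key, h1, dist_nonneg (x := x) (y := y)]
  · ext p
    simp only [Set.mem_range, Set.mem_setOf_eq]
    constructor
    · rintro ⟨x, rfl⟩
      constructor
      · rw [WithLp.equiv_symm_fst, ← hr₁]; exact ⟨_, rfl⟩
      · rw [WithLp.equiv_symm_snd, ← hr₂]; exact ⟨_, rfl⟩
    · rintro ⟨hp1, hp2⟩
      rw [← hr₁] at hp1
      rw [← hr₂] at hp2
      obtain ⟨a, ha⟩ := hp1
      obtain ⟨b, hb⟩ := hp2
      refine ⟨(WithLp.toLp 2 fun i => Fin.addCases (fun i => a i) (fun i => b i) i :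
        EuclideanSpace ℝ (Fin (k₁ + k₂))), ?_⟩
      have hca : (WithLp.toLp 2 fun i => (WithLp.toLp 2 fun i => Fin.addCases (fun j => a j) (fun j => b j) i :
          EuclideanSpace ℝ (Fin (k₁+k₂))) (Fin.castAdd k₂ i)) = a := by
        ext i; simp
      have hcb : (WithLp.toLp 2 fun i => (WithLp.toLp 2 fun i => Fin.addCases (fun j => a j) (fun j => b j) i :
          EuclideanSpace ℝ (Fin (k₁+k₂))) (Fin.natAdd k₁ i)) = b := by
        ext i; simp
      rw [hca, hcb, ha, hb]
      rfl

lemma isFlat_nonempty {X : Type*} [MetricSpace X] {F : Set X} (h : IsFlat F) : F.Nonempty := by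
  obtain ⟨k, e, he, hr⟩ := h
  exact hr ▸ ⟨e 0, ⟨0, rfl⟩⟩

lemma proj_flat_fst' (h₁ : CAT0Space X₁) (h₂ : CAT0Space X₂) {k : ℕ} {e : EuclideanSpace ℝ (Fin k) → WithLp 2 (X₁ × X₂)}
    (he : Isometry e) : IsFlat (Set.range fun x => (e x).ofLp.1) :=
  proj_flat_fst h₁ h₂ he

lemma proj_flat_snd' (h₁ : CAT0Space X₁) (h₂ : CAT0Space X₂) {k : ℕ} {e : EuclideanSpace ℝ (Fin k) → WithLp 2 (X₁ × X₂)}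
    (he : Isometry e) : IsFlat (Set.range fun x => (e x).ofLp.2) :=
  proj_flat_fst h₂ h₁ (swap_isometry e he)

theorem maximalFlat_prod_iff' (h₁ : CAT0Space X₁) (h₂ : CAT0Space X₂)
    (F : Set (WithLp 2 (X₁ × X₂))) :
    IsMaximalFlat F ↔ ∃ (F₁ : Set X₁) (F₂ : Set X₂), IsMaximalFlat F₁ ∧ IsMaximalFlat F₂ ∧
      F = {p : WithLp 2 (X₁ × X₂) |
        (WithLp.equiv 2 (X₁ × X₂) p).1 ∈ F₁ ∧ (WithLp.equiv 2 (X₁ × X₂) p).2 ∈ F₂} := by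
  constructor
  · rintro ⟨hF, hmax⟩
    obtain ⟨k, e, he, hre⟩ := hF
    have hflat1 : IsFlat (Set.range fun x => (e x).ofLp.1) := proj_flat_fst' h₁ h₂ he
    have hflat2 : IsFlat (Set.range fun x => (e x).ofLp.2) := proj_flat_snd' h₁ h₂ he
    have hG : IsFlat {p : WithLp 2 (X₁ × X₂) | p.ofLp.1 ∈ Set.range (fun x => (e x).ofLp.1) ∧
        p.ofLp.2 ∈ Set.range (fun x => (e x).ofLp.2)} := isFlat_prod hflat1 hflat2
    have hFG : F ⊆ {p : WithLp 2 (X₁ × X₂) | p.ofLp.1 ∈ Set.range (fun x => (e x).ofLp.1) ∧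
        p.ofLp.2 ∈ Set.range (fun x => (e x).ofLp.2)} := by
      intro z hz
      rw [← hre] at hz
      obtain ⟨x, rfl⟩ := hz
      exact ⟨⟨x, rfl⟩, ⟨x, rfl⟩⟩
    have hFeq := hmax _ hG hFG
    refine ⟨Set.range (fun x => (e x).ofLp.1), Set.range (fun x => (e x).ofLp.2), ⟨hflat1, ?_⟩,
      ⟨hflat2, ?_⟩, hFeq⟩
    · intro F' hF' hsub
      have hH : IsFlat {p : WithLp 2 (X₁ × X₂) | p.ofLp.1 ∈ F' ∧
          p.ofLp.2 ∈ Set.range (fun x => (e x).ofLp.2)} := isFlat_prod hF' hflat2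
      have hFH : F ⊆ {p : WithLp 2 (X₁ × X₂) | p.ofLp.1 ∈ F' ∧
          p.ofLp.2 ∈ Set.range (fun x => (e x).ofLp.2)} := by
        intro z hz
        have := hFG hz
        exact ⟨hsub this.1, this.2⟩
      have hFeq2 := hmax _ hH hFH
      apply Set.Subset.antisymm hsub
      intro z hz
      have hp : ((WithLp.equiv 2 (X₁ × X₂)).symm (z, (e 0).ofLp.2)) ∈
          {p : WithLp 2 (X₁ × X₂) | p.ofLp.1 ∈ F' ∧ p.ofLp.2 ∈ Set.range (fun x => (e x).ofLp.2)} := by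
        constructor
        · rw [WithLp.equiv_symm_fst]; exact hz
        · rw [WithLp.equiv_symm_snd]; exact ⟨0, rfl⟩
      rw [← hFeq2, hFeq] at hp
      have := hp.1
      rwa [WithLp.equiv_symm_fst] at this
    · intro F' hF' hsub
      have hH : IsFlat {p : WithLp 2 (X₁ × X₂) | p.ofLp.1 ∈ Set.range (fun x => (e x).ofLp.1) ∧
          p.ofLp.2 ∈ F'} := isFlat_prod hflat1 hF'
      have hFH : F ⊆ {p : WithLp 2 (X₁ × X₂) | p.ofLp.1 ∈ Set.range (fun x => (e x).ofLp.1) ∧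
          p.ofLp.2 ∈ F'} := by
        intro z hz
        have := hFG hz
        exact ⟨this.1, hsub this.2⟩
      have hFeq2 := hmax _ hH hFH
      apply Set.Subset.antisymm hsub
      intro z hz
      have hp : ((WithLp.equiv 2 (X₁ × X₂)).symm ((e 0).ofLp.1, z)) ∈
          {p : WithLp 2 (X₁ × X₂) | p.ofLp.1 ∈ Set.range (fun x => (e x).ofLp.1) ∧ p.ofLp.2 ∈ F'} := by
        constructor
        · rw [WithLp.equiv_symm_fst]; exact ⟨0, rfl⟩
        · rw [WithLp.equiv_symm_snd]; exact hz
      rw [← hFeq2, hFeq] at hp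
      have := hp.2
      rwa [WithLp.equiv_symm_snd] at this
  · rintro ⟨F₁, F₂, ⟨hf1, hmax1⟩, ⟨hf2, hmax2⟩, rfl⟩
    have hset : {p : WithLp 2 (X₁ × X₂) |
        (WithLp.equiv 2 (X₁ × X₂) p).1 ∈ F₁ ∧ (WithLp.equiv 2 (X₁ × X₂) p).2 ∈ F₂}
        = {p : WithLp 2 (X₁ × X₂) | p.ofLp.1 ∈ F₁ ∧ p.ofLp.2 ∈ F₂} := rfl
    rw [hset]
    constructor
    · exact isFlat_prod hf1 hf2
    · intro F' hF' hsub
      obtain ⟨k, e', he', hre⟩ := hF'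
      have hA : IsFlat (Set.range fun x => (e' x).ofLp.1) := proj_flat_fst' h₁ h₂ he'
      have hB : IsFlat (Set.range fun x => (e' x).ofLp.2) := proj_flat_snd' h₁ h₂ he'
      obtain ⟨q, hq⟩ := isFlat_nonempty hf2
      obtain ⟨q1, hq1⟩ := isFlat_nonempty hf1
      have hF1A : F₁ ⊆ Set.range fun x => (e' x).ofLp.1 := by
        intro z hz
        have hp : ((WithLp.equiv 2 (X₁ × X₂)).symm (z, q)) ∈
            {p : WithLp 2 (X₁ × X₂) | p.ofLp.1 ∈ F₁ ∧ p.ofLp.2 ∈ F₂} := by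
          constructor
          · rw [WithLp.equiv_symm_fst]; exact hz
          · rw [WithLp.equiv_symm_snd]; exact hq
        have := hsub hp
        rw [← hre] at this
        obtain ⟨x, hx⟩ := this
        refine ⟨x, ?_⟩
        show (e' x).ofLp.1 = z
        rw [hx, WithLp.equiv_symm_fst]
      have hF2B : F₂ ⊆ Set.range fun x => (e' x).ofLp.2 := by
        intro z hz
        have hp : ((WithLp.equiv 2 (X₁ × X₂)).symm (q1, z)) ∈
            {p : WithLp 2 (X₁ × X₂) | p.ofLp.1 ∈ F₁ ∧ p.ofLp.2 ∈ F₂} := by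
          constructor
          · rw [WithLp.equiv_symm_fst]; exact hq1
          · rw [WithLp.equiv_symm_snd]; exact hz
        have := hsub hp
        rw [← hre] at this
        obtain ⟨x, hx⟩ := this
        refine ⟨x, ?_⟩
        show (e' x).ofLp.2 = z
        rw [hx, WithLp.equiv_symm_snd]
      have h1 := hmax1 _ hA hF1A
      have h2 := hmax2 _ hB hF2B
      apply Set.Subset.antisymm hsub
      intro p hp
      rw [← hre] at hp
      obtain ⟨x, rfl⟩ := hp
      exact ⟨h1 ▸ ⟨x, rfl⟩, h2 ▸ ⟨x, rfl⟩⟩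
end prodflat


theorem maximalFlat_prod_iff {X₁ X₂ : Type*} [MetricSpace X₁] [MetricSpace X₂]
    (h₁ : CAT0Space X₁) (h₂ : CAT0Space X₂) (F : Set (WithLp 2 (X₁ × X₂))) :
    IsMaximalFlat F ↔ ∃ (F₁ : Set X₁) (F₂ : Set X₂), IsMaximalFlat F₁ ∧ IsMaximalFlat F₂ ∧
      F = {p : WithLp 2 (X₁ × X₂) |
        (WithLp.equiv 2 (X₁ × X₂) p).1 ∈ F₁ ∧ (WithLp.equiv 2 (X₁ × X₂) p).2 ∈ F₂} :=
  maximalFlat_prod_iff' h₁ h₂ F
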